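/- Let ∗ be a linear involution on the associative algebra UT_n over a field K where every automorphism of UT_n is inner. Write x∗ = A t(x) A⁻¹ for some invertible A ∈ UT_n, where t is the antidiagonal flip. Then t(A) = A or t(A) = −A. -/

import Mathlib

open Matrix

/-- The flip along the antidiagonal. -/
def tFlip {n : ℕ} {K : Type*} [Field K] (x : Matrix (Fin n) (Fin n) K) :
    Matrix (Fin n) (Fin n) K :=
  Matrix.of fun i j => x j.rev i.rev

lemma tFlip_mul {n : ℕ} {K : Type*} [Field K] (x y : Matrix (Fin n) (Fin n) K) :
    tFlip (x * y) = tFlip y * tFlip x := by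
  ext i j
  simp only [tFlip, Matrix.of_apply, Matrix.mul_apply]
  exact Fintype.sum_equiv Fin.revPerm _ _ (by intro k; simp [mul_comm])

lemma tFlip_one {n : ℕ} {K : Type*} [Field K] :
    tFlip (1 : Matrix (Fin n) (Fin n) K) = 1 := by
  ext i j
  simp only [tFlip, Matrix.of_apply, Matrix.one_apply, Fin.rev_inj]
  simp [eq_comm]

lemma tFlip_tFlip {n : ℕ} {K : Type*} [Field K] (x : Matrix (Fin n) (Fin n) K) :
    tFlip (tFlip x) = x := by
  ext i j; simp [tFlip]

lemma tFlip_smul {n : ℕ} {K : Type*} [Field K] (c : K) (x : Matrix (Fin n) (Fin n) K) :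
    tFlip (c • x) = c • tFlip x := by
  ext i j; simp [tFlip]

/-- if the map `x ↦ A t(x) A⁻¹` (with `A` invertible upper triangular) is
involutive on the upper triangular matrices, then `t(A) = A` or `t(A) = −A`. -/
theorem involution_forces_symmetric_or_skew {n : ℕ} {K : Type*} [Field K]
    (hchar : (2 : K) ≠ 0)
    (A B : Matrix (Fin n) (Fin n) K)
    (hUTA : ∀ i j : Fin n, j < i → A i j = 0)
    (hAB : A * B = 1) (hBA : B * A = 1)
    (hinv : ∀ x : Matrix (Fin n) (Fin n) K, (∀ i j : Fin n, j < i → x i j = 0) →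
      A * tFlip (A * tFlip x * B) * B = x) :
    tFlip A = A ∨ tFlip A = -A := by
  rcases Nat.eq_zero_or_pos n with hn | hn
  · left; subst hn; ext i j; exact i.elim0
  set Q : Matrix (Fin n) (Fin n) K := tFlip A * B with hQ
  have htAB : tFlip A * tFlip B = 1 := by rw [← tFlip_mul, hBA, tFlip_one]
  -- involution equation in usable form
  have key : ∀ x : Matrix (Fin n) (Fin n) K, (∀ i j : Fin n, j < i → x i j = 0) →
      A * (tFlip B * x * tFlip A) * B = x := by
    intro x hx
    have := hinv x hx
    rwa [tFlip_mul, tFlip_mul, tFlip_tFlip, ← mul_assoc (tFlip B)] at this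
  -- Q commutes with all upper triangular matrices
  have hcomm : ∀ x : Matrix (Fin n) (Fin n) K, (∀ i j : Fin n, j < i → x i j = 0) →
      Q * x = x * Q := by
    intro x hx
    conv_lhs => rw [← key x hx]
    rw [hQ]
    calc tFlip A * B * (A * (tFlip B * x * tFlip A) * B)
        = tFlip A * (B * A) * tFlip B * x * (tFlip A * B) := by
          simp only [mul_assoc]
      _ = x * (tFlip A * B) := by rw [hBA, mul_one, htAB, one_mul]
  -- std basis matrices with i ≤ j are UT
  have hstdUT : ∀ i j : Fin n, i ≤ j →
      (∀ a b : Fin n, b < a → Matrix.single i j (1 : K) a b = 0) := by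
    intro i j hij a b hba
    simp only [Matrix.single, Matrix.of_apply]
    rw [if_neg]
    rintro ⟨ha, hb⟩
    subst ha; subst hb
    exact absurd hba (not_lt.mpr hij)
  set z : Fin n := ⟨0, hn⟩
  set lam : K := Q z z with hlam
  have hoff : ∀ a k : Fin n, a ≠ k → Q a k = 0 := by
    intro a k hak
    have h := congrFun (congrFun (hcomm (Matrix.single k k 1) (hstdUT k k le_rfl)) a) k
    rw [Matrix.mul_single_apply_same,
        Matrix.single_mul_apply_of_ne (h := hak)] at h
    simpa using h
  have hdiageq : ∀ i j : Fin n, Q i i = Q j j := by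
    have main : ∀ i j : Fin n, i ≤ j → Q i i = Q j j := by
      intro i j hij
      have h := congrFun (congrFun (hcomm (Matrix.single i j 1) (hstdUT i j hij)) i) j
      rw [Matrix.mul_single_apply_same,
          Matrix.single_mul_apply_same] at h
      simpa using h
    intro i j
    rcases le_total i j with h | h
    · exact main i j h
    · exact (main j i h).symm
  have hQs : Q = lam • 1 := by
    ext a b
    by_cases h : a = b
    · subst h; simp [Matrix.one_apply, hdiageq a z, hlam]
    · simp [Matrix.one_apply, h, hoff a b h]
  -- tFlip A = lam • A
  have htA : tFlip A = lam • A := by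
    have : Q * A = lam • A := by rw [hQs]; simp [Matrix.smul_mul]
    rw [hQ, mul_assoc, hBA, mul_one] at this
    exact this
  -- lam^2 = 1
  have hAne : ∃ i j : Fin n, A i j ≠ 0 := by
    by_contra h
    push_neg at h
    have : A = 0 := by ext i j; exact h i j
    rw [this, zero_mul] at hAB
    have := congrFun (congrFun hAB z) z
    simp [Matrix.one_apply] at this
  obtain ⟨i, j, hij⟩ := hAne
  have hsq : lam * lam = 1 := by
    have hA2 : A = (lam * lam) • A := by
      conv_lhs => rw [← tFlip_tFlip A, htA, tFlip_smul, htA, smul_smul]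
    have := congrFun (congrFun hA2 i) j
    simp only [Matrix.smul_apply, smul_eq_mul] at this
    have h2 : (lam * lam) * A i j = 1 * A i j := by rw [one_mul, ← this]
    exact mul_right_cancel₀ hij h2
  have : (lam - 1) * (lam + 1) = 0 := by ring_nf; rw [← hsq]; ring
  rcases mul_eq_zero.mp this with h | h
  · left; rw [htA, sub_eq_zero.mp h, one_smul]
  · right; rw [htA, eq_neg_of_add_eq_zero_left h, neg_one_smul]
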